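/- Let h = h_11·x·y + h_10·x + h_01·y + h_00, H_1 = h_11, H_2 = h_11 h_00 − h_10 h_01, and suppose h_11 ≠ 0, h_11 x + h_01 ≠ 0 on a domain where (1−h²)² − 4(H_1 h − H_2)² > 0 and |h| < 1. Then the function z(x,y) = [1 − h² + √((1−h²)² − 4(H_1 h − H_2)²)] / (2(h_11 x + h_01)²) satisfies the linear combination of symmetry generators h_11·(x z_x − y z_y + 2z) + h_01·z_x − h_10·z_y = 0. -/

import Mathlib

open Real

/-- The bilinear function `h = h₁₁xy + h₁₀x + h₀₁y + h₀₀`. -/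
def hfun (h11 h10 h01 h00 x y : ℝ) : ℝ := h11 * x * y + h10 * x + h01 * y + h00

/-- The general Lipschitz solution of the constant astigmatism equation:
`z = (1 − h² + √((1−h²)² − 4(H₁h − H₂)²)) / (2(h₁₁x + h₀₁)²)`,
with `H₁ = h₁₁`, `H₂ = h₁₁h₀₀ − h₁₀h₀₁`. -/
noncomputable def zLip (h11 h10 h01 h00 x y : ℝ) : ℝ :=
  (1 - hfun h11 h10 h01 h00 x y ^ 2
    + Real.sqrt ((1 - hfun h11 h10 h01 h00 x y ^ 2) ^ 2
        - 4 * (h11 * hfun h11 h10 h01 h00 x y - (h11 * h00 - h10 * h01)) ^ 2))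
    / (2 * (h11 * x + h01) ^ 2)

/-- The general Lipschitz solution satisfies the symmetry-invariance equation
`h₁₁·(x z_x − y z_y + 2z) + h₀₁·z_x − h₁₀·z_y = 0`. -/
theorem stmt_18 (h11 h10 h01 h00 x y : ℝ)
    (h11ne : h11 ≠ 0)
    (hden : h11 * x + h01 ≠ 0)
    (habs : |hfun h11 h10 h01 h00 x y| < 1)
    (hdisc : 0 < (1 - hfun h11 h10 h01 h00 x y ^ 2) ^ 2
      - 4 * (h11 * hfun h11 h10 h01 h00 x y - (h11 * h00 - h10 * h01)) ^ 2) :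
    h11 * (x * deriv (fun t => zLip h11 h10 h01 h00 t y) x
        - y * deriv (fun t => zLip h11 h10 h01 h00 x t) y
        + 2 * zLip h11 h10 h01 h00 x y)
      + h01 * deriv (fun t => zLip h11 h10 h01 h00 t y) x
      - h10 * deriv (fun t => zLip h11 h10 h01 h00 x t) y = 0 := by
  have h := hfun h11 h10 h01 h00 x y
  set hv := hfun h11 h10 h01 h00 x y with hhv
  have hDne : (1 - hv ^ 2) ^ 2 - 4 * (h11 * hv - (h11 * h00 - h10 * h01)) ^ 2 ≠ 0 :=
    ne_of_gt hdisc
  -- derivative of the outer function F at hv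
  have h1 : HasDerivAt (fun u : ℝ => 1 - u ^ 2) (-(2 * hv)) hv := by
    simpa using (hasDerivAt_pow 2 hv).const_sub 1
  have h2 : HasDerivAt (fun u : ℝ => (1 - u ^ 2) ^ 2)
      (2 * (1 - hv ^ 2) * -(2 * hv)) hv := by
    simpa using h1.fun_pow 2
  have h3 : HasDerivAt (fun u : ℝ => h11 * u - (h11 * h00 - h10 * h01)) h11 hv := by
    simpa using ((hasDerivAt_id hv).const_mul h11).sub_const (h11 * h00 - h10 * h01)
  have h4 : HasDerivAt (fun u : ℝ => 4 * (h11 * u - (h11 * h00 - h10 * h01)) ^ 2)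
      (4 * (2 * (h11 * hv - (h11 * h00 - h10 * h01)) * h11)) hv := by
    simpa using (h3.fun_pow 2).const_mul 4
  have hq := h2.fun_sub h4
  have hsq := hq.sqrt hDne
  have hF := h1.fun_add hsq
  set FD := -(2 * hv) + (2 * (1 - hv ^ 2) * -(2 * hv)
      - 4 * (2 * (h11 * hv - (h11 * h00 - h10 * h01)) * h11))
      / (2 * Real.sqrt ((1 - hv ^ 2) ^ 2 - 4 * (h11 * hv - (h11 * h00 - h10 * h01)) ^ 2))
    with hFD
  -- inner derivatives
  have hhx : HasDerivAt (fun t => hfun h11 h10 h01 h00 t y) (h11 * y + h10) x := by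
    have : HasDerivAt (fun t : ℝ => (h11 * y + h10) * t + (h01 * y + h00))
        (h11 * y + h10) x := by
      simpa using ((hasDerivAt_id x).const_mul (h11 * y + h10)).add_const (h01 * y + h00)
    convert this using 2 with t
    unfold hfun; ring
  have hhy : HasDerivAt (fun t => hfun h11 h10 h01 h00 x t) (h11 * x + h01) y := by
    have : HasDerivAt (fun t : ℝ => (h11 * x + h01) * t + (h10 * x + h00))
        (h11 * x + h01) y := by
      simpa using ((hasDerivAt_id y).const_mul (h11 * x + h01)).add_const (h10 * x + h00)
    convert this using 2 with t
    unfold hfun; ring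
  have hGx : HasDerivAt (fun t => (1 - hfun h11 h10 h01 h00 t y ^ 2
      + Real.sqrt ((1 - hfun h11 h10 h01 h00 t y ^ 2) ^ 2
        - 4 * (h11 * hfun h11 h10 h01 h00 t y - (h11 * h00 - h10 * h01)) ^ 2)))
      (FD * (h11 * y + h10)) x := by
    have := hF.comp x hhx
    exact this
  have hGy : HasDerivAt (fun t => (1 - hfun h11 h10 h01 h00 x t ^ 2
      + Real.sqrt ((1 - hfun h11 h10 h01 h00 x t ^ 2) ^ 2
        - 4 * (h11 * hfun h11 h10 h01 h00 x t - (h11 * h00 - h10 * h01)) ^ 2)))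
      (FD * (h11 * x + h01)) y := by
    have := hF.comp y hhy
    exact this
  have hdx : HasDerivAt (fun t : ℝ => 2 * (h11 * t + h01) ^ 2)
      (4 * h11 * (h11 * x + h01)) x := by
    have : HasDerivAt (fun t : ℝ => h11 * t + h01) h11 x := by
      simpa using ((hasDerivAt_id x).const_mul h11).add_const h01
    have := (this.fun_pow 2).const_mul 2
    convert this using 1
    all_goals first | rfl | (push_cast; ring)
  have hcne : (2 : ℝ) * (h11 * x + h01) ^ 2 ≠ 0 := by positivity
  set Fv := (1 - hv ^ 2 + Real.sqrt ((1 - hv ^ 2) ^ 2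
      - 4 * (h11 * hv - (h11 * h00 - h10 * h01)) ^ 2)) with hFv
  have hzx : HasDerivAt (fun t => zLip h11 h10 h01 h00 t y)
      ((FD * (h11 * y + h10) * (2 * (h11 * x + h01) ^ 2)
        - Fv * (4 * h11 * (h11 * x + h01))) / (2 * (h11 * x + h01) ^ 2) ^ 2) x := by
    have := hGx.fun_div hdx hcne
    simpa [zLip, hhv] using this
  have hzy : HasDerivAt (fun t => zLip h11 h10 h01 h00 x t)
      (FD * (h11 * x + h01) / (2 * (h11 * x + h01) ^ 2)) y := by
    have := hGy.div_const (2 * (h11 * x + h01) ^ 2)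
    simpa [zLip, hhv] using this
  rw [hzx.deriv, hzy.deriv]
  have hz : zLip h11 h10 h01 h00 x y = Fv / (2 * (h11 * x + h01) ^ 2) := by
    simp [zLip, hhv, hFv]
  rw [hz]
  field_simp
  ring
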